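/- Let I_m denote the two-sided ideal of the free unital associative algebra K⟨X⟩ generated by all left-normed commutators [u_1,...,u_m] of elements of K⟨X⟩. Then for m, n ≥ 2, I_m · I_n ⊆ I_{m+n−2}. -/

import Mathlib

/-- The commutator `[a,b] = ab - ba` in a ring. -/
def rcomm {A : Type*} [Ring A] (a b : A) : A := a * b - b * a

/-- The left-normed commutator `[a, l₀, l₁, ...]`. -/
def lnc {A : Type*} [Ring A] (a : A) (l : List A) : A := l.foldl rcomm a

variable (K : Type*) [Field K]

/-- The set of left-normed commutators `[u_1, ..., u_m]` of elements of the free unital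
associative algebra `K⟨X⟩` on a countable set `X`. -/
def commSet (m : ℕ) : Set (FreeAlgebra K ℕ) :=
  {w | ∃ (a : FreeAlgebra K ℕ) (l : List (FreeAlgebra K ℕ)), l.length + 1 = m ∧ w = lnc a l}

/-- The two-sided ideal `I_m` of `K⟨X⟩` generated by all left-normed commutators of
length `m`, as the `K`-span of the elements `u·c·v` with `c` such a commutator. -/
def commIdeal (m : ℕ) : Submodule K (FreeAlgebra K ℕ) :=
  Submodule.span K {w | ∃ u v c, c ∈ commSet K m ∧ w = u * c * v}

/-! ### Basic lemmas on `rcomm` and `lnc` -/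

section LncBasic

variable {A : Type*} [Ring A]

lemma rcomm_add_left (a b c : A) : rcomm (a + b) c = rcomm a c + rcomm b c := by
  simp only [rcomm]; noncomm_ring

lemma rcomm_add_right (a b c : A) : rcomm a (b + c) = rcomm a b + rcomm a c := by
  simp only [rcomm]; noncomm_ring

lemma rcomm_zero_left (c : A) : rcomm 0 c = 0 := by simp [rcomm]

lemma rcomm_zero_right (c : A) : rcomm c 0 = 0 := by simp [rcomm]

lemma rcomm_neg_left (a c : A) : rcomm (-a) c = -rcomm a c := by
  simp only [rcomm]; noncomm_ring

lemma rcomm_sub_left (a b c : A) : rcomm (a - b) c = rcomm a c - rcomm b c := by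
  simp only [rcomm]; noncomm_ring

@[simp] lemma lnc_nil (a : A) : lnc a [] = a := rfl

lemma lnc_cons (a x : A) (l : List A) : lnc a (x :: l) = lnc (rcomm a x) l := rfl

lemma lnc_append (a : A) (l₁ l₂ : List A) : lnc a (l₁ ++ l₂) = lnc (lnc a l₁) l₂ :=
  List.foldl_append ..

lemma lnc_concat (a x : A) (l : List A) : lnc a (l ++ [x]) = rcomm (lnc a l) x := by
  rw [lnc_append]; rfl

lemma lnc_add (l : List A) : ∀ a b : A, lnc (a + b) l = lnc a l + lnc b l := by
  induction l with
  | nil => intro a b; rfl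
  | cons x l ih => intro a b; rw [lnc_cons, lnc_cons, lnc_cons, rcomm_add_left]; exact ih _ _

lemma lnc_zero (l : List A) : lnc (0 : A) l = 0 := by
  induction l with
  | nil => rfl
  | cons x l ih => rw [lnc_cons, rcomm_zero_left]; exact ih

lemma lnc_neg (l : List A) : ∀ a : A, lnc (-a) l = -lnc a l := by
  induction l with
  | nil => intro a; rfl
  | cons x l ih => intro a; rw [lnc_cons, lnc_cons, rcomm_neg_left]; exact ih _

lemma lnc_sub (l : List A) (a b : A) : lnc (a - b) l = lnc a l - lnc b l := by
  rw [sub_eq_add_neg, lnc_add, lnc_neg, sub_eq_add_neg]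

end LncBasic

section SmulLemmas

variable {K}

lemma rcomm_smul_left (k : K) (a c : FreeAlgebra K ℕ) :
    rcomm (k • a) c = k • rcomm a c := by
  simp only [rcomm, smul_mul_assoc, mul_smul_comm, smul_sub]

lemma lnc_smul (l : List (FreeAlgebra K ℕ)) : ∀ (k : K) (a : FreeAlgebra K ℕ),
    lnc (k • a) l = k • lnc a l := by
  induction l with
  | nil => intro k a; rfl
  | cons x l ih => intro k a; rw [lnc_cons, lnc_cons, rcomm_smul_left]; exact ih _ _

end SmulLemmas

/-! ### The span of pure commutators of a given weight -/

/-- The `K`-span of all left-normed commutators of weight `w`. -/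
def pureSpan (w : ℕ) : Submodule K (FreeAlgebra K ℕ) :=
  Submodule.span K {x | ∃ a l, l.length + 1 = w ∧ x = lnc a l}

variable {K}

lemma mem_pureSpan_gen (a : FreeAlgebra K ℕ) (l : List (FreeAlgebra K ℕ)) :
    lnc a l ∈ pureSpan K (l.length + 1) :=
  Submodule.subset_span ⟨a, l, rfl, rfl⟩

lemma mem_pureSpan_one (a : FreeAlgebra K ℕ) : a ∈ pureSpan K 1 :=
  mem_pureSpan_gen a []

lemma pureSpan_zero_eq_bot : pureSpan K 0 = ⊥ := by
  rw [pureSpan, Submodule.span_eq_bot]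
  rintro x ⟨a, l, h, rfl⟩
  omega

lemma rcomm_mem_pureSpan {w : ℕ} {P : FreeAlgebra K ℕ} (hP : P ∈ pureSpan K w)
    (x : FreeAlgebra K ℕ) : rcomm P x ∈ pureSpan K (w + 1) := by
  refine Submodule.span_induction (p := fun P _ => rcomm P x ∈ pureSpan K (w + 1))
    ?_ ?_ ?_ ?_ hP
  · rintro P ⟨a, l, hl, rfl⟩
    rw [← lnc_concat]
    have := mem_pureSpan_gen a (l ++ [x])
    have hlen : (l ++ [x]).length + 1 = w + 1 := by simp; omega
    rwa [hlen] at this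
  · show rcomm 0 x ∈ _
    rw [rcomm_zero_left]; exact Submodule.zero_mem _
  · intro y z _ _ hy hz
    show rcomm (y + z) x ∈ _
    rw [rcomm_add_left]; exact Submodule.add_mem _ hy hz
  · intro k y _ hy
    show rcomm (k • y) x ∈ _
    rw [rcomm_smul_left]; exact Submodule.smul_mem _ _ hy

lemma lnc_mem_pureSpan : ∀ (l : List (FreeAlgebra K ℕ)) {w : ℕ} {P : FreeAlgebra K ℕ},
    P ∈ pureSpan K w → lnc P l ∈ pureSpan K (w + l.length) := by
  intro l
  induction l with
  | nil => intro w P hP; simpa using hP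
  | cons z l ih =>
    intro w P hP
    rw [lnc_cons]
    have := ih (rcomm_mem_pureSpan hP z)
    have he : w + 1 + l.length = w + (z :: l).length := by simp; omega
    rwa [he] at this

/-- Jacobi-type absorption: the commutator of two pure-span elements of weights `a` and `b`
lies in the pure span of weight `a + b`. -/
lemma rcomm_mem_pure_pure : ∀ (b : ℕ) (a : ℕ) (P Q : FreeAlgebra K ℕ),
    P ∈ pureSpan K a → Q ∈ pureSpan K b → rcomm P Q ∈ pureSpan K (a + b) := by
  intro b
  induction b using Nat.strong_induction_on with
  | _ b IHb =>
    match b with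
    | 0 => intro a P Q hP hQ
           rw [pureSpan_zero_eq_bot, Submodule.mem_bot] at hQ
           rw [hQ, rcomm_zero_right]; exact Submodule.zero_mem _
    | 1 => intro a P Q hP _; exact rcomm_mem_pureSpan hP Q
    | (b' + 2) =>
      intro a P Q hP hQ
      refine Submodule.span_induction
        (p := fun Q _ => rcomm P Q ∈ pureSpan K (a + (b' + 2))) ?_ ?_ ?_ ?_ hQ
      · rintro Q ⟨q, lq, hlq, rfl⟩
        have hne : lq ≠ [] := by rintro rfl; simp at hlq
        obtain ⟨l₀, x, rfl⟩ : ∃ l₀ x, lq = l₀ ++ [x] :=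
          ⟨lq.dropLast, lq.getLast hne, (List.dropLast_append_getLast hne).symm⟩
        rw [lnc_concat]
        set Q' := lnc q l₀ with hQ'
        have hlen : l₀.length + 1 = b' + 1 := by
          have := hlq; simp at this; omega
        have hQ'mem : Q' ∈ pureSpan K (b' + 1) := by
          have := mem_pureSpan_gen q l₀; rwa [hlen] at this
        have jac : rcomm P (rcomm Q' x)
            = rcomm (rcomm P Q') x - rcomm (rcomm P x) Q' := by
          simp only [rcomm]; noncomm_ring
        rw [jac]
        have h1 : rcomm (rcomm P Q') x ∈ pureSpan K (a + (b' + 2)) := by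
          have h0 := IHb (b' + 1) (by omega) a P Q' hP hQ'mem
          have := rcomm_mem_pureSpan h0 x
          have he : a + (b' + 1) + 1 = a + (b' + 2) := by omega
          rwa [he] at this
        have h2 : rcomm (rcomm P x) Q' ∈ pureSpan K (a + (b' + 2)) := by
          have h0 := IHb (b' + 1) (by omega) (a + 1) (rcomm P x) Q'
            (rcomm_mem_pureSpan hP x) hQ'mem
          have he : a + 1 + (b' + 1) = a + (b' + 2) := by omega
          rwa [he] at h0
        exact Submodule.sub_mem _ h1 h2
      · show rcomm P 0 ∈ _
        rw [rcomm_zero_right]; exact Submodule.zero_mem _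
      · intro y z _ _ hy hz
        show rcomm P (y + z) ∈ _
        rw [rcomm_add_right]; exact Submodule.add_mem _ hy hz
      · intro k y _ hy
        show rcomm P (k • y) ∈ _
        have : rcomm P (k • y) = k • rcomm P y := by
          simp only [rcomm, smul_mul_assoc, mul_smul_comm, smul_sub]
        rw [this]; exact Submodule.smul_mem _ _ hy

/-! ### Ideal lemmas for `commIdeal` -/

lemma mem_commIdeal_gen {t : ℕ} (u v c : FreeAlgebra K ℕ) (hc : c ∈ commSet K t) :
    u * c * v ∈ commIdeal K t :=
  Submodule.subset_span ⟨u, v, c, hc, rfl⟩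

lemma commIdeal_mul_left {t : ℕ} (z : FreeAlgebra K ℕ) {x : FreeAlgebra K ℕ}
    (hx : x ∈ commIdeal K t) : z * x ∈ commIdeal K t := by
  refine Submodule.span_induction (p := fun x _ => z * x ∈ commIdeal K t) ?_ ?_ ?_ ?_ hx
  · rintro x ⟨u, v, c, hc, rfl⟩
    have : z * (u * c * v) = (z * u) * c * v := by noncomm_ring
    rw [this]; exact mem_commIdeal_gen _ _ _ hc
  · show z * 0 ∈ _
    rw [mul_zero]; exact Submodule.zero_mem _
  · intro a b _ _ ha hb
    show z * (a + b) ∈ _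
    rw [mul_add]; exact Submodule.add_mem _ ha hb
  · intro k a _ ha
    show z * (k • a) ∈ _
    rw [mul_smul_comm]; exact Submodule.smul_mem _ _ ha

lemma commIdeal_mul_right {t : ℕ} (z : FreeAlgebra K ℕ) {x : FreeAlgebra K ℕ}
    (hx : x ∈ commIdeal K t) : x * z ∈ commIdeal K t := by
  refine Submodule.span_induction (p := fun x _ => x * z ∈ commIdeal K t) ?_ ?_ ?_ ?_ hx
  · rintro x ⟨u, v, c, hc, rfl⟩
    have : (u * c * v) * z = u * c * (v * z) := by noncomm_ring
    rw [this]; exact mem_commIdeal_gen _ _ _ hc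
  · show (0 : FreeAlgebra K ℕ) * z ∈ _
    rw [zero_mul]; exact Submodule.zero_mem _
  · intro a b _ _ ha hb
    show (a + b) * z ∈ _
    rw [add_mul]; exact Submodule.add_mem _ ha hb
  · intro k a _ ha
    show (k • a) * z ∈ _
    rw [smul_mul_assoc]; exact Submodule.smul_mem _ _ ha

lemma pureSpan_le_commIdeal (t : ℕ) : pureSpan K t ≤ commIdeal K t := by
  rw [pureSpan, Submodule.span_le]
  rintro x ⟨a, l, hl, rfl⟩
  have : lnc a l = 1 * lnc a l * 1 := by noncomm_ring
  rw [this]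
  exact mem_commIdeal_gen _ _ _ ⟨a, l, hl, rfl⟩

lemma commIdeal_succ_le {t : ℕ} (ht : 1 ≤ t) : commIdeal K (t + 1) ≤ commIdeal K t := by
  rw [commIdeal, Submodule.span_le]
  rintro x ⟨u, v, c, ⟨a, l, hl, rfl⟩, rfl⟩
  have hne : l ≠ [] := by rintro rfl; simp at hl; omega
  obtain ⟨l₀, b, rfl⟩ : ∃ l₀ b, l = l₀ ++ [b] :=
    ⟨l.dropLast, l.getLast hne, (List.dropLast_append_getLast hne).symm⟩
  rw [lnc_concat]
  have hlen : l₀.length + 1 = t := by simp at hl; omega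
  have hc' : lnc a l₀ ∈ commSet K t := ⟨a, l₀, hlen, rfl⟩
  have key : u * rcomm (lnc a l₀) b * v
      = u * lnc a l₀ * (b * v) - (u * b) * lnc a l₀ * v := by
    simp only [rcomm]; noncomm_ring
  rw [key]
  exact Submodule.sub_mem _ (mem_commIdeal_gen _ _ _ hc') (mem_commIdeal_gen _ _ _ hc')

lemma commIdeal_le_of_le {t s : ℕ} (ht : 1 ≤ t) (h : t ≤ s) :
    commIdeal K s ≤ commIdeal K t := by
  induction s, h using Nat.le_induction with
  | base => exact le_rfl
  | succ s hs ih => exact le_trans (commIdeal_succ_le (by omega)) ih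

lemma commSet_mem_pureSpan {t : ℕ} {c : FreeAlgebra K ℕ} (hc : c ∈ commSet K t) :
    c ∈ pureSpan K t := by
  obtain ⟨a, l, hl, rfl⟩ := hc
  have := mem_pureSpan_gen a l
  rwa [hl] at this

/-! ### The reversal anti-automorphism -/

variable (K) in
noncomputable def revHom : FreeAlgebra K ℕ →ₐ[K] (FreeAlgebra K ℕ)ᵐᵒᵖ :=
  FreeAlgebra.lift K (fun i => MulOpposite.op (FreeAlgebra.ι K i))

variable (K) in
noncomputable def rev (x : FreeAlgebra K ℕ) : FreeAlgebra K ℕ :=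
  (revHom K x).unop

lemma rev_add (x y : FreeAlgebra K ℕ) : rev K (x + y) = rev K x + rev K y := by
  simp [rev, map_add]

lemma rev_smul (k : K) (x : FreeAlgebra K ℕ) : rev K (k • x) = k • rev K x := by
  simp [rev, map_smul]

lemma rev_mul (x y : FreeAlgebra K ℕ) : rev K (x * y) = rev K y * rev K x := by
  simp [rev, map_mul]

lemma rev_zero : rev K (0 : FreeAlgebra K ℕ) = 0 := by simp [rev, map_zero]

lemma rev_sub (x y : FreeAlgebra K ℕ) : rev K (x - y) = rev K x - rev K y := by
  simp [rev, map_sub]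

lemma rev_algebraMap (k : K) : rev K (algebraMap K (FreeAlgebra K ℕ) k)
    = algebraMap K (FreeAlgebra K ℕ) k := by
  simp [rev, AlgHom.commutes, MulOpposite.algebraMap_apply]

lemma rev_iota (i : ℕ) : rev K (FreeAlgebra.ι K i) = FreeAlgebra.ι K i := by
  simp [rev, revHom, FreeAlgebra.lift_ι_apply]

lemma rev_rev (x : FreeAlgebra K ℕ) : rev K (rev K x) = x := by
  induction x using FreeAlgebra.induction with
  | grade0 r => rw [rev_algebraMap, rev_algebraMap]
  | grade1 i => rw [rev_iota, rev_iota]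
  | mul a b ha hb => rw [rev_mul, rev_mul, ha, hb]
  | add a b ha hb => rw [rev_add, rev_add, ha, hb]

lemma rev_rcomm (a b : FreeAlgebra K ℕ) :
    rev K (rcomm a b) = rcomm (rev K b) (rev K a) := by
  simp only [rcomm, rev_sub, rev_mul]

lemma rev_mem_pureSpan {w : ℕ} {x : FreeAlgebra K ℕ} (hx : x ∈ pureSpan K w) :
    rev K x ∈ pureSpan K w := by
  refine Submodule.span_induction (p := fun x _ => rev K x ∈ pureSpan K w) ?_ ?_ ?_ ?_ hx
  · rintro x ⟨a, l, hl, rfl⟩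
    clear hx
    subst hl
    induction l using List.reverseRecOn generalizing a with
    | nil => simpa using mem_pureSpan_one (rev K a)
    | append_singleton l x ih =>
      rw [lnc_concat, rev_rcomm]
      have h1 : rev K (lnc a l) ∈ pureSpan K (l.length + 1) := ih a
      have h2 : rcomm (rev K (lnc a l)) (rev K x) ∈ pureSpan K (l.length + 1 + 1) :=
        rcomm_mem_pureSpan h1 _
      have hneg : rcomm (rev K x) (rev K (lnc a l))
          = -rcomm (rev K (lnc a l)) (rev K x) := by
        simp only [rcomm]; noncomm_ring
      rw [hneg]
      have he : l.length + 1 + 1 = (l ++ [x]).length + 1 := by simp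
      rw [← he]
      exact Submodule.neg_mem _ h2
  · show rev K 0 ∈ _
    rw [rev_zero]; exact Submodule.zero_mem _
  · intro y z _ _ hy hz
    show rev K (y + z) ∈ _
    rw [rev_add]; exact Submodule.add_mem _ hy hz
  · intro k y _ hy
    show rev K (k • y) ∈ _
    rw [rev_smul]; exact Submodule.smul_mem _ _ hy

lemma rev_mem_commIdeal {t : ℕ} {x : FreeAlgebra K ℕ} (hx : x ∈ commIdeal K t) :
    rev K x ∈ commIdeal K t := by
  refine Submodule.span_induction (p := fun x _ => rev K x ∈ commIdeal K t) ?_ ?_ ?_ ?_ hx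
  · rintro x ⟨u, v, c, hc, rfl⟩
    rw [rev_mul, rev_mul]
    have hcmem : rev K c ∈ commIdeal K t :=
      pureSpan_le_commIdeal t (rev_mem_pureSpan (commSet_mem_pureSpan hc))
    exact commIdeal_mul_left _ (commIdeal_mul_right _ hcmem)
  · show rev K 0 ∈ _
    rw [rev_zero]; exact Submodule.zero_mem _
  · intro y z _ _ hy hz
    show rev K (y + z) ∈ _
    rw [rev_add]; exact Submodule.add_mem _ hy hz
  · intro k y _ hy
    show rev K (k • y) ∈ _
    rw [rev_smul]; exact Submodule.smul_mem _ _ hy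

/-! ### Measures for the master induction -/

def iotaU (t j : ℕ) : ℕ := if j = 1 then t + 6 else if j = 2 then t + 5 else j

def muU (t j r : ℕ) : ℕ := 2 * (j + r) * (t + 7) + iotaU t j

def muW (t i r : ℕ) : ℕ := (2 * (i + r) + 1) * (t + 7) + r

lemma mu_key {B c₁ c₂ d₁ d₂ : ℕ} (h1 : c₁ ≤ c₂) (h2 : c₁ = c₂ → d₁ < d₂)
    (h3 : c₁ < c₂ → d₁ < B) : c₁ * B + d₁ < c₂ * B + d₂ := by
  rcases Nat.lt_or_ge c₁ c₂ with h | h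
  · calc c₁ * B + d₁ < c₁ * B + B := by have := h3 h; omega
      _ = (c₁ + 1) * B := by ring
      _ ≤ c₂ * B := Nat.mul_le_mul_right B h
      _ ≤ c₂ * B + d₂ := Nat.le_add_right _ _
  · have hc : c₁ = c₂ := le_antisymm h1 h
    subst hc; have := h2 rfl; omega

lemma iotaU_lt {t i : ℕ} (h : i ≤ t + 6) : iotaU t i < t + 7 := by
  unfold iotaU
  split
  · omega
  · split <;> omega

lemma iotaU_one (t : ℕ) : iotaU t 1 = t + 6 := by simp [iotaU]
lemma iotaU_two (t : ℕ) : iotaU t 2 = t + 5 := by simp [iotaU]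
lemma iotaU_three (t : ℕ) : iotaU t 3 = 3 := by simp [iotaU]

lemma muU_lt_21 (t n : ℕ) : muU t 2 n < muU t 1 (n + 1) := by
  unfold muU; rw [iotaU_two, iotaU_one]; apply mu_key <;> (intros; omega)

lemma muU_lt_11 (t n : ℕ) : muU t 1 n < muU t 1 (n + 1) := by
  unfold muU; rw [iotaU_one]; apply mu_key <;> (intros; omega)

lemma muU_lt_32 (t n : ℕ) : muU t 3 n < muU t 2 (n + 1) := by
  unfold muU; rw [iotaU_three, iotaU_two]; apply mu_key <;> (intros; omega)

lemma muU_lt_22 (t n : ℕ) : muU t 2 n < muU t 2 (n + 1) := by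
  unfold muU; rw [iotaU_two]; apply mu_key <;> (intros; omega)

lemma muU_lt_23 (t r : ℕ) : muU t 2 r < muU t 3 r := by
  unfold muU; rw [iotaU_two, iotaU_three]; apply mu_key <;> (intros; omega)

lemma muW_lt_U3 (t α r : ℕ) (hα : α ≤ 2) (hr : r ≤ t + 2) : muW t α r < muU t 3 r := by
  unfold muW muU; rw [iotaU_three]; apply mu_key <;> (intros; omega)

lemma iotaU_ge3 (t j : ℕ) (hj : 3 ≤ j) : iotaU t j = j := by
  unfold iotaU
  have h1 : j ≠ 1 := by omega
  have h2 : j ≠ 2 := by omega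
  simp [h1, h2]

lemma muU_lt_j1 (t j r : ℕ) (hj : 3 ≤ j) : muU t j (r + 1) < muU t (j + 1) r := by
  unfold muU
  rw [iotaU_ge3 t j hj, iotaU_ge3 t (j+1) (by omega)]
  apply mu_key <;> (intros; omega)

lemma muU_lt_j2 (t j r : ℕ) (hj : 3 ≤ j) (hjt : j < t + 7) : muU t j r < muU t (j + 1) r := by
  unfold muU
  rw [iotaU_ge3 t j hj, iotaU_ge3 t (j+1) (by omega)]
  apply mu_key <;> (intros; omega)

lemma muW_lt_W1 (t i n : ℕ) (hn : n < t + 7) : muW t i n < muW t i (n + 1) := by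
  unfold muW; apply mu_key <;> (intros; omega)

lemma muW_lt_W2 (t i n : ℕ) : muW t (i + 1) n < muW t i (n + 1) := by
  unfold muW; apply mu_key <;> (intros; omega)

lemma muU_lt_W0 (t i : ℕ) (hi : i ≤ t + 6) : muU t i 0 < muW t i 0 := by
  unfold muU muW
  apply mu_key
  · omega
  · omega
  · intro _; exact iotaU_lt hi

/-! ### The master theorem -/

theorem master (t : ℕ) (ht : 1 ≤ t) : ∀ (ν : ℕ), ∀ i j r : ℕ, i + j + r = t + 2 →
    ((muU t j r ≤ ν) → ∀ D ∈ pureSpan K i, ∀ E ∈ pureSpan K j,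
        ∀ l : List (FreeAlgebra K ℕ), l.length = r → lnc (D * E) l ∈ commIdeal K t)
  ∧ ((muW t i r ≤ ν) → ∀ D ∈ pureSpan K i, ∀ E ∈ pureSpan K j,
        ∀ l : List (FreeAlgebra K ℕ), l.length = r → lnc (D * E) l ∈ commIdeal K t) := by
  intro ν
  induction ν using Nat.strong_induction_on with
  | _ ν IH =>
  intro i j r hsum
  constructor
  · -- the `U` family
    rcases j with _ | _ | _ | _ | j4
    · -- j = 0 : E = 0
      intro hν D hD E hE l hl
      rw [pureSpan_zero_eq_bot, Submodule.mem_bot] at hE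
      rw [hE, mul_zero, lnc_zero]
      exact Submodule.zero_mem _
    · -- j = 1
      intro hν D hD E hE l hl
      rcases l with _ | ⟨z, l'⟩
      · have hr : r = 0 := by simpa using hl.symm
        subst hr
        simp only [lnc_nil]
        have hi : i = t + 1 := by omega
        rw [hi] at hD
        have hD' : D ∈ commIdeal K (t + 1) := pureSpan_le_commIdeal _ hD
        exact commIdeal_mul_right E (commIdeal_le_of_le ht (by omega) hD')
      · have hr : r = l'.length + 1 := by simpa using hl.symm
        subst hr
        rw [lnc_cons, show rcomm (D * E) z = D * rcomm E z + rcomm D z * E from by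
          simp only [rcomm]; noncomm_ring, lnc_add]
        refine Submodule.add_mem _ ?_ ?_
        · exact (IH (muU t 2 l'.length) (lt_of_lt_of_le (muU_lt_21 t l'.length) hν)
            i 2 l'.length (by omega)).1 le_rfl D hD (rcomm E z)
            (rcomm_mem_pureSpan hE z) l' rfl
        · exact (IH (muU t 1 l'.length) (lt_of_lt_of_le (muU_lt_11 t l'.length) hν)
            (i + 1) 1 l'.length (by omega)).1 le_rfl (rcomm D z)
            (rcomm_mem_pureSpan hD z) E hE l' rfl
    · -- j = 2
      intro hν D hD E hE l hl
      rcases l with _ | ⟨z, l'⟩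
      · have hr : r = 0 := by simpa using hl.symm
        subst hr
        simp only [lnc_nil]
        have hi : i = t := by omega
        rw [hi] at hD
        exact commIdeal_mul_right E (pureSpan_le_commIdeal _ hD)
      · have hr : r = l'.length + 1 := by simpa using hl.symm
        subst hr
        rw [lnc_cons, show rcomm (D * E) z = D * rcomm E z + rcomm D z * E from by
          simp only [rcomm]; noncomm_ring, lnc_add]
        refine Submodule.add_mem _ ?_ ?_
        · exact (IH (muU t 3 l'.length) (lt_of_lt_of_le (muU_lt_32 t l'.length) hν)
            i 3 l'.length (by omega)).1 le_rfl D hD (rcomm E z)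
            (rcomm_mem_pureSpan hE z) l' rfl
        · exact (IH (muU t 2 l'.length) (lt_of_lt_of_le (muU_lt_22 t l'.length) hν)
            (i + 1) 2 l'.length (by omega)).1 le_rfl (rcomm D z)
            (rcomm_mem_pureSpan hD z) E hE l' rfl
    · -- j = 3 : the key case
      intro hν D hD E hE l hl
      rcases i with _ | _ | i'
      · -- i = 0
        rw [pureSpan_zero_eq_bot, Submodule.mem_bot] at hD
        rw [hD, zero_mul, lnc_zero]
        exact Submodule.zero_mem _
      · -- i = 1 : reroute through the `W` family
        exact (IH (muW t 1 r) (lt_of_lt_of_le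
            (muW_lt_U3 t 1 r (by omega) (by omega)) hν) 1 3 r hsum).2
          le_rfl D hD E hE l hl
      · -- i = i' + 2
        refine Submodule.span_induction (p := fun D _ =>
            ∀ E ∈ pureSpan K 3, ∀ l : List (FreeAlgebra K ℕ), l.length = r →
              lnc (D * E) l ∈ commIdeal K t) ?_ ?_ ?_ ?_ hD E hE l hl
        · rintro D ⟨a, lD, hlD, rfl⟩
          have hne : lD ≠ [] := by rintro rfl; simp at hlD
          obtain ⟨l₀, b, rfl⟩ : ∃ l₀ b, lD = l₀ ++ [b] :=
            ⟨lD.dropLast, lD.getLast hne, (List.dropLast_append_getLast hne).symm⟩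
          rw [lnc_concat]
          have hG : lnc a l₀ ∈ pureSpan K (i' + 1) := by
            have := mem_pureSpan_gen a l₀
            have he : l₀.length + 1 = i' + 1 := by simp at hlD; omega
            rwa [he] at this
          set G := lnc a l₀ with hGdef
          clear_value G
          intro E hE
          refine Submodule.span_induction (p := fun E _ =>
              ∀ l : List (FreeAlgebra K ℕ), l.length = r →
                lnc (rcomm G b * E) l ∈ commIdeal K t) ?_ ?_ ?_ ?_ hE
          · rintro E ⟨a₂, lE, hlE, rfl⟩
            intro l hl
            have hlen2 : lE.length = 2 := by omega
            obtain ⟨p, q, rfl⟩ : ∃ p q, lE = [p, q] := by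
              rcases lE with _ | ⟨p, lE⟩
              · simp at hlen2
              rcases lE with _ | ⟨q, lE⟩
              · simp at hlen2
              rcases lE with _ | ⟨s, lE⟩
              · exact ⟨p, q, rfl⟩
              · simp at hlen2
            have hEexp : lnc a₂ [p, q] = rcomm (rcomm a₂ p) q := rfl
            rw [hEexp]
            set E' := rcomm a₂ p with hE'def
            have hE'mem : E' ∈ pureSpan K 2 := by
              have := mem_pureSpan_gen a₂ [p]
              simpa [lnc] using this
            clear_value E'
            have hid : rcomm G b * rcomm E' q
                = rcomm (rcomm G (b * E')) q - rcomm (rcomm G b) q * E'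
                  - b * rcomm (rcomm G E') q - rcomm b q * rcomm G E' := by
              simp only [rcomm]; noncomm_ring
            rw [hid, lnc_sub, lnc_sub, lnc_sub]
            have hGE' : rcomm G E' ∈ pureSpan K (i' + 3) :=
              rcomm_mem_pure_pure 2 (i' + 1) G E' hG hE'mem
            refine Submodule.sub_mem _ (Submodule.sub_mem _ (Submodule.sub_mem _ ?_ ?_) ?_) ?_
            · -- τ1 : a pure chain of full weight
              have h1 : rcomm (rcomm G (b * E')) q = lnc G [b * E', q] := rfl
              rw [h1, ← lnc_append]
              have hm := lnc_mem_pureSpan ([b * E', q] ++ l) hG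
              have he : i' + 1 + ([b * E', q] ++ l).length = t := by
                simp; omega
              rw [he] at hm
              exact pureSpan_le_commIdeal t hm
            · -- τ2 : U(i+1, 2, r)
              have hD₂ : rcomm (rcomm G b) q ∈ pureSpan K (i' + 3) :=
                rcomm_mem_pureSpan (rcomm_mem_pureSpan hG b) q
              exact (IH (muU t 2 r) (lt_of_lt_of_le (muU_lt_23 t r) hν)
                (i' + 3) 2 r (by omega)).1 le_rfl _ hD₂ E' hE'mem l hl
            · -- τ3 : W(1, i+2, r)
              have hQ : rcomm (rcomm G E') q ∈ pureSpan K (i' + 4) :=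
                rcomm_mem_pureSpan hGE' q
              exact (IH (muW t 1 r) (lt_of_lt_of_le
                  (muW_lt_U3 t 1 r (by omega) (by omega)) hν) 1 (i' + 4) r
                  (by omega)).2 le_rfl b (mem_pureSpan_one b) _ hQ l hl
            · -- τ4 : W(2, i+1, r)
              have hP₂ : rcomm b q ∈ pureSpan K 2 := by
                have := mem_pureSpan_gen b [q]
                simpa [lnc] using this
              exact (IH (muW t 2 r) (lt_of_lt_of_le
                  (muW_lt_U3 t 2 r (by omega) (by omega)) hν) 2 (i' + 3) r
                  (by omega)).2 le_rfl _ hP₂ _ hGE' l hl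
          · intro l hl
            show lnc (rcomm G b * 0) l ∈ _
            rw [mul_zero, lnc_zero]; exact Submodule.zero_mem _
          · intro x y _ _ hx hy l hl
            show lnc (rcomm G b * (x + y)) l ∈ _
            rw [mul_add, lnc_add]
            exact Submodule.add_mem _ (hx l hl) (hy l hl)
          · intro k x _ hx l hl
            show lnc (rcomm G b * (k • x)) l ∈ _
            rw [mul_smul_comm, lnc_smul]
            exact Submodule.smul_mem _ _ (hx l hl)
        · intro E _ l hl
          show lnc ((0 : FreeAlgebra K ℕ) * E) l ∈ _
          rw [zero_mul, lnc_zero]; exact Submodule.zero_mem _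
        · intro x y _ _ hx hy E hE l hl
          show lnc ((x + y) * E) l ∈ _
          rw [add_mul, lnc_add]
          exact Submodule.add_mem _ (hx E hE l hl) (hy E hE l hl)
        · intro k x _ hx E hE l hl
          show lnc ((k • x) * E) l ∈ _
          rw [smul_mul_assoc, lnc_smul]
          exact Submodule.smul_mem _ _ (hx E hE l hl)
    · -- j = j4 + 4
      intro hν D hD E hE l hl
      refine Submodule.span_induction (p := fun E _ =>
          ∀ l : List (FreeAlgebra K ℕ), l.length = r →
            lnc (D * E) l ∈ commIdeal K t) ?_ ?_ ?_ ?_ hE l hl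
      · rintro E ⟨a, lE, hlE, rfl⟩
        intro l hl
        have hne : lE ≠ [] := by rintro rfl; simp at hlE
        obtain ⟨l₀, e, rfl⟩ : ∃ l₀ e, lE = l₀ ++ [e] :=
          ⟨lE.dropLast, lE.getLast hne, (List.dropLast_append_getLast hne).symm⟩
        rw [lnc_concat]
        have hE' : lnc a l₀ ∈ pureSpan K (j4 + 3) := by
          have := mem_pureSpan_gen a l₀
          have he : l₀.length + 1 = j4 + 3 := by simp at hlE; omega
          rwa [he] at this
        set E' := lnc a l₀ with hE'def
        clear_value E'
        rw [show D * rcomm E' e = rcomm (D * E') e - rcomm D e * E' from by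
          simp only [rcomm]; noncomm_ring, lnc_sub]
        refine Submodule.sub_mem _ ?_ ?_
        · rw [← lnc_cons]
          exact (IH (muU t (j4 + 3) (r + 1)) (lt_of_lt_of_le
              (muU_lt_j1 t (j4 + 3) r (by omega)) hν) i (j4 + 3) (r + 1)
              (by omega)).1 le_rfl D hD E' hE' (e :: l) (by simp [hl])
        · exact (IH (muU t (j4 + 3) r) (lt_of_lt_of_le
              (muU_lt_j2 t (j4 + 3) r (by omega) (by omega)) hν) (i + 1) (j4 + 3) r
              (by omega)).1 le_rfl (rcomm D e) (rcomm_mem_pureSpan hD e) E' hE' l hl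
      · intro l hl
        show lnc (D * 0) l ∈ _
        rw [mul_zero, lnc_zero]; exact Submodule.zero_mem _
      · intro x y _ _ hx hy l hl
        show lnc (D * (x + y)) l ∈ _
        rw [mul_add, lnc_add]
        exact Submodule.add_mem _ (hx l hl) (hy l hl)
      · intro k x _ hx l hl
        show lnc (D * (k • x)) l ∈ _
        rw [mul_smul_comm, lnc_smul]
        exact Submodule.smul_mem _ _ (hx l hl)
  · -- the `W` family
    intro hν D hD E hE l hl
    rcases l with _ | ⟨z, l'⟩
    · have hr : r = 0 := by simpa using hl.symm
      subst hr
      simp only [lnc_nil]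
      have h1 : rev K E ∈ pureSpan K j := rev_mem_pureSpan hE
      have h2 : rev K D ∈ pureSpan K i := rev_mem_pureSpan hD
      have hcall := (IH (muU t i 0) (lt_of_lt_of_le
          (muU_lt_W0 t i (by omega)) hν) j i 0 (by omega)).1 le_rfl _ h1 _ h2 [] rfl
      simp only [lnc_nil] at hcall
      have := rev_mem_commIdeal hcall
      rwa [rev_mul, rev_rev, rev_rev] at this
    · have hr : r = l'.length + 1 := by simpa using hl.symm
      subst hr
      rw [lnc_cons, show rcomm (D * E) z = D * rcomm E z + rcomm D z * E from by
        simp only [rcomm]; noncomm_ring, lnc_add]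
      refine Submodule.add_mem _ ?_ ?_
      · exact (IH (muW t i l'.length) (lt_of_lt_of_le
            (muW_lt_W1 t i l'.length (by omega)) hν) i (j + 1) l'.length
            (by omega)).2 le_rfl D hD (rcomm E z) (rcomm_mem_pureSpan hE z) l' rfl
      · exact (IH (muW t (i + 1) l'.length) (lt_of_lt_of_le
            (muW_lt_W2 t i l'.length) hν) (i + 1) j l'.length
            (by omega)).2 le_rfl (rcomm D z) (rcomm_mem_pureSpan hD z) E hE l' rfl

/-- Latyshev, Gupta–Levin: for `m, n ≥ 2`, `I_m · I_n ⊆ I_{m+n−2}`. -/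
theorem stmt_18 (m n : ℕ) (hm : 2 ≤ m) (hn : 2 ≤ n) :
    commIdeal K m * commIdeal K n ≤ commIdeal K (m + n - 2) := by
  rw [Submodule.mul_le]
  intro x hx y hy
  have h2 : (m + n - 2) + 2 = m + n := by omega
  have ht : 1 ≤ m + n - 2 := by omega
  refine Submodule.span_induction (p := fun x _ =>
      ∀ y ∈ commIdeal K n, x * y ∈ commIdeal K (m + n - 2)) ?_ ?_ ?_ ?_ hx y hy
  · rintro x ⟨u, v, c, hc, rfl⟩
    intro y hy
    refine Submodule.span_induction (p := fun y _ =>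
        (u * c * v) * y ∈ commIdeal K (m + n - 2)) ?_ ?_ ?_ ?_ hy
    · rintro y ⟨u', v', c', hc', rfl⟩
      obtain ⟨a, lc, hlc, rfl⟩ := hc
      have hne : lc ≠ [] := by rintro rfl; simp at hlc; omega
      obtain ⟨l₀, b, rfl⟩ : ∃ l₀ b, lc = l₀ ++ [b] :=
        ⟨lc.dropLast, lc.getLast hne, (List.dropLast_append_getLast hne).symm⟩
      rw [lnc_concat]
      have hG : lnc a l₀ ∈ pureSpan K (l₀.length + 1) := mem_pureSpan_gen a l₀
      set G := lnc a l₀ with hGdef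
      clear_value G
      have hm' : l₀.length + 2 = m := by simp at hlc; omega
      have hc'p : c' ∈ pureSpan K n := commSet_mem_pureSpan hc'
      have hG1 : rcomm G (b * (v * u')) ∈ pureSpan K m := by
        have := rcomm_mem_pureSpan hG (b * (v * u'))
        rwa [show l₀.length + 1 + 1 = m from by omega] at this
      have hG2 : rcomm G (v * u') ∈ pureSpan K m := by
        have := rcomm_mem_pureSpan hG (v * u')
        rwa [show l₀.length + 1 + 1 = m from by omega] at this
      have hU1 := (master (m + n - 2) ht (muU (m + n - 2) n 0) m n 0 (by omega)).1
        le_rfl _ hG1 c' hc'p [] rfl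
      have hU2 := (master (m + n - 2) ht (muU (m + n - 2) n 0) m n 0 (by omega)).1
        le_rfl _ hG2 c' hc'p [] rfl
      simp only [lnc_nil] at hU1 hU2
      have hkey : (u * rcomm G b * v) * (u' * c' * v')
          = u * (rcomm G (b * (v * u')) * c') * v'
            - u * (b * (rcomm G (v * u') * c')) * v' := by
        simp only [rcomm]; noncomm_ring
      rw [hkey]
      refine Submodule.sub_mem _ ?_ ?_
      · exact commIdeal_mul_right v' (commIdeal_mul_left u hU1)
      · exact commIdeal_mul_right v' (commIdeal_mul_left u (commIdeal_mul_left b hU2))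
    · show (u * c * v) * 0 ∈ _
      rw [mul_zero]; exact Submodule.zero_mem _
    · intro a b _ _ ha hb
      show (u * c * v) * (a + b) ∈ _
      rw [mul_add]; exact Submodule.add_mem _ ha hb
    · intro k a _ ha
      show (u * c * v) * (k • a) ∈ _
      rw [mul_smul_comm]; exact Submodule.smul_mem _ _ ha
  · intro y _
    show (0 : FreeAlgebra K ℕ) * y ∈ _
    rw [zero_mul]; exact Submodule.zero_mem _
  · intro a b _ _ ha hb y hy
    show (a + b) * y ∈ _
    rw [add_mul]; exact Submodule.add_mem _ (ha y hy) (hb y hy)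
  · intro k a _ ha y hy
    show (k • a) * y ∈ _
    rw [smul_mul_assoc]; exact Submodule.smul_mem _ _ (ha y hy)
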